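/- For every real s, the Weierstrass product identity 1/Γ(s+1) = e^{γ s} ∏_{p≥1} (1 + s/p) e^{−s/p} holds, where γ is the Euler–Mascheroni constant and the infinite product converges. -/

import Mathlib

open Filter Finset Real Topology

lemma wp_log_bound {x : ℝ} (hx : |x| ≤ 1/2) :
    |Real.log (1 + x) - x| ≤ 2 * x ^ 2 := by
  have h1 : |(-x)| < 1 := by rw [abs_neg]; linarith
  have h := Real.abs_log_sub_add_sum_range_le h1 1
  simp only [Finset.sum_range_one, pow_one, Nat.cast_zero, zero_add, div_one,
    sub_neg_eq_add, abs_neg] at h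
  have hsq : |x| ^ (1+1) = x ^ 2 := by rw [← sq_abs x]
  rw [hsq] at h
  have h2 : x ^ 2 / (1 - |x|) ≤ 2 * x ^ 2 := by
    rw [div_le_iff₀ (by linarith)]
    nlinarith [sq_nonneg x, abs_nonneg x]
  have h3 : |Real.log (1 + x) - x| = |-x + Real.log (1 + x)| := by
    congr 1; ring
  linarith [h3 ▸ (le_trans h h2)]

lemma wp_multipliable (s : ℝ) :
    Multipliable (fun p : ℕ => (1 + s / (p + 1)) * Real.exp (-s / (p + 1))) := by
  set g : ℕ → ℝ := fun p : ℕ => (1 + s / (p + 1)) * Real.exp (-s / (p + 1)) with hg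
  set k : ℕ := ⌈2 * |s|⌉₊ with hk
  have hm : ∀ n : ℕ, |s / (n + k + 1 : ℝ)| ≤ 1/2 := by
    intro n
    have hk2 : 2 * |s| ≤ (n + k + 1 : ℝ) := by
      have := Nat.le_ceil (2 * |s|)
      push_cast
      push_cast at this
      linarith [Nat.cast_nonneg (α := ℝ) n]
    have hden : (0:ℝ) < (n + k + 1 : ℝ) := by positivity
    rw [abs_div, abs_of_pos hden, div_le_iff₀ hden]
    linarith
  have hpos : ∀ n : ℕ, 0 < g (n + k) := by
    intro n
    have h1 := hm n
    have : (0:ℝ) < 1 + s / (n + k + 1 : ℝ) := by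
      have := abs_le.mp h1
      linarith [this.1]
    have he : (0:ℝ) < Real.exp (-s / (n + k + 1 : ℝ)) := Real.exp_pos _
    have : 0 < (1 + s / ((n + k : ℕ) + 1 : ℝ)) * Real.exp (-s / ((n + k : ℕ) + 1 : ℝ)) := by
      push_cast
      exact mul_pos (by push_cast at this ⊢; linarith) (Real.exp_pos _)
    exact this
  have hsum : Summable (fun n : ℕ => Real.log (g (n + k))) := by
    have hb : Summable (fun n : ℕ => 2 * s ^ 2 * (1 / ((n:ℝ) + 1) ^ 2)) := by
      apply Summable.mul_left
      have := (summable_nat_add_iff (f := fun n : ℕ => 1 / (n:ℝ) ^ 2) 1).mpr ?_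
      · exact this.congr fun n => by push_cast; ring
      · rw [summable_one_div_nat_pow]; norm_num
    apply Summable.of_abs
    apply hb.of_nonneg_of_le (fun n => abs_nonneg _)
    intro n
    have h1 := hm n
    have hx : |s / ((n + k : ℕ) + 1 : ℝ)| ≤ 1/2 := by push_cast; push_cast at h1; exact h1
    have hlog : Real.log (g (n + k)) =
        Real.log (1 + s / ((n + k : ℕ) + 1 : ℝ)) - s / ((n + k : ℕ) + 1 : ℝ) := by
      rw [hg]
      simp only []
      rw [Real.log_mul (by
          have := abs_le.mp hx; nlinarith [this.1]) (Real.exp_ne_zero _),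
        Real.log_exp, neg_div, ← sub_eq_add_neg]
    rw [hlog]
    calc |Real.log (1 + s / ((n + k : ℕ) + 1 : ℝ)) - s / ((n + k : ℕ) + 1 : ℝ)|
        ≤ 2 * (s / ((n + k : ℕ) + 1 : ℝ)) ^ 2 := wp_log_bound hx
      _ ≤ 2 * s ^ 2 * (1 / ((n:ℝ) + 1) ^ 2) := by
          rw [div_pow, mul_one_div, ← mul_div_assoc, div_le_div_iff₀ (by positivity) (by positivity)]
          have : ((n:ℝ) + 1) ^ 2 ≤ ((n + k : ℕ) + 1 : ℝ) ^ 2 := by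
            apply pow_le_pow_left₀ (by positivity)
            push_cast; linarith [Nat.cast_nonneg (α := ℝ) k]
          nlinarith [sq_nonneg s]
  have hmk : Multipliable (fun n : ℕ => g (n + k)) :=
    Real.multipliable_of_summable_log (f := fun n : ℕ => g (n + k)) hpos hsum
  exact hmk.comp_nat_add


/-- the Weierstrass product
`1/Γ(s+1) = e^{γs} ∏_{p≥1} (1 + s/p) e^{−s/p}` for every real `s`,
where `γ` is the Euler–Mascheroni constant, and the product converges. -/
theorem weierstrass_product_gamma (s : ℝ) :
    Multipliable (fun p : ℕ => (1 + s / (p + 1)) * Real.exp (-s / (p + 1))) ∧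
    1 / Real.Gamma (s + 1) =
      Real.exp (Real.eulerMascheroniConstant * s) *
        ∏' p : ℕ, (1 + s / (p + 1)) * Real.exp (-s / (p + 1)) := by
  refine ⟨wp_multipliable s, ?_⟩
  set γ := Real.eulerMascheroniConstant with hγ
  set g : ℕ → ℝ := fun p : ℕ => (1 + s / (p + 1)) * Real.exp (-s / (p + 1)) with hg
  have hM := wp_multipliable s
  have hT : Tendsto (fun n => ∏ i ∈ range n, g i) atTop (𝓝 (∏' p, g p)) :=
    hM.hasProd.tendsto_prod_nat
  have key : Tendsto (fun n : ℕ => Real.exp (γ * s) * ∏ i ∈ range n, g i) atTop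
      (𝓝 (1 / Real.Gamma (s + 1))) := by
    by_cases h : ∃ m : ℕ, s + ((m : ℝ) + 1) = 0
    · obtain ⟨m, hm⟩ := h
      have hΓ : Real.Gamma (s + 1) = 0 := by
        have : s + 1 = -(m : ℝ) := by linarith
        rw [this, Real.Gamma_neg_nat_eq_zero]
      rw [hΓ, div_zero]
      apply tendsto_const_nhds.congr'
      filter_upwards [eventually_ge_atTop (m + 1)] with n hn
      have hgm : g m = 0 := by
        have : 1 + s / ((m : ℝ) + 1) = 0 := by
          have hme : ((m : ℝ) + 1) ≠ 0 := by positivity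
          field_simp
          linarith
        rw [hg]; simp only []
        rw [this, zero_mul]
      rw [Finset.prod_eq_zero (Finset.mem_range.mpr (by omega)) hgm, mul_zero]
    · push_neg at h
      have hΓ : Real.Gamma (s + 1) ≠ 0 := by
        apply Real.Gamma_ne_zero
        intro m hm
        exact h m (by linarith)
      have t1 : Tendsto (fun n : ℕ => Real.exp (s * (γ - ((harmonic n : ℝ) - Real.log n))))
          atTop (𝓝 1) := by
        have h0 : Tendsto (fun n : ℕ => s * (γ - ((harmonic n : ℝ) - Real.log n))) atTop
            (𝓝 (s * (γ - γ))) :=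
          (tendsto_const_nhds.sub Real.tendsto_harmonic_sub_log).const_mul s
        rw [sub_self, mul_zero] at h0
        have := (Real.continuous_exp.tendsto 0).comp h0
        simpa [Function.comp_def] using this
      have t2 : Tendsto (fun n : ℕ => (n : ℝ) / ((n : ℝ) + (s + 1))) atTop (𝓝 1) :=
        tendsto_natCast_div_add_atTop (s + 1)
      have t3 : Tendsto (fun n : ℕ => (Real.GammaSeq (s + 1) n)⁻¹) atTop
          (𝓝 (Real.Gamma (s + 1))⁻¹) :=
        (Real.GammaSeq_tendsto_Gamma (s + 1)).inv₀ hΓ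
      have tall := (t1.mul t2).mul t3
      rw [mul_one, one_mul] at tall
      rw [one_div]
      apply tall.congr'
      filter_upwards [eventually_ge_atTop 1] with n hn
      -- now prove the identity for n ≥ 1
      have hn0 : (0 : ℝ) < n := by exact_mod_cast hn
      have hnne : (n : ℝ) ≠ 0 := ne_of_gt hn0
      have hfac : (n.factorial : ℝ) ≠ 0 := by positivity
      have hQ : ∏ i ∈ range n, (s + 1 + (i : ℝ)) ≠ 0 := by
        apply Finset.prod_ne_zero_iff.mpr
        intro i _
        have := h i
        intro hc; apply this; linarith
      have hsn : s + 1 + (n : ℝ) ≠ 0 := by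
        have := h n
        intro hc; apply this; linarith
      -- compute the partial product
      have hharm : (harmonic n : ℝ) = ∑ i ∈ range n, (((i : ℝ) + 1))⁻¹ := by
        rw [harmonic]; push_cast; ring
      have hexpprod : ∏ i ∈ range n, Real.exp (-s / ((i : ℝ) + 1)) =
          Real.exp (-(s * (harmonic n : ℝ))) := by
        rw [← Real.exp_sum, hharm, Finset.mul_sum]
        congr 1
        rw [← Finset.sum_neg_distrib]
        apply Finset.sum_congr rfl
        intro i _
        rw [div_eq_mul_inv, neg_mul]
      have hfacprod : ∏ i ∈ range n, ((i : ℝ) + 1) = (n.factorial : ℝ) := by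
        exact_mod_cast congrArg (Nat.cast : ℕ → ℝ) (Finset.prod_range_add_one_eq_factorial n)
      have hQprod : ∏ i ∈ range n, (1 + s / ((i : ℝ) + 1)) =
          (∏ i ∈ range n, (s + 1 + (i : ℝ))) / (n.factorial : ℝ) := by
        rw [← hfacprod, ← Finset.prod_div_distrib]
        apply Finset.prod_congr rfl
        intro i _
        have : ((i : ℝ) + 1) ≠ 0 := by positivity
        field_simp
        ring
      have hprod : ∏ i ∈ range n, g i =
          (∏ i ∈ range n, (s + 1 + (i : ℝ))) / (n.factorial : ℝ) *
            Real.exp (-(s * (harmonic n : ℝ))) := by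
        rw [hg]
        simp only [Finset.prod_mul_distrib]
        rw [hQprod, hexpprod]
      -- GammaSeq
      have hGS : Real.GammaSeq (s + 1) n =
          (n : ℝ) ^ (s + 1 : ℝ) * (n.factorial : ℝ) /
            ((∏ i ∈ range n, (s + 1 + (i : ℝ))) * (s + 1 + (n : ℝ))) := by
        rw [Real.GammaSeq, Finset.prod_range_succ]
      have hpow : (n : ℝ) ^ (s + 1 : ℝ) = (n : ℝ) ^ (s : ℝ) * (n : ℝ) := by
        rw [Real.rpow_add hn0, Real.rpow_one]
      have hCne : (n : ℝ) ^ (s : ℝ) ≠ 0 := by positivity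
      have hexps : Real.exp (s * (γ - ((harmonic n : ℝ) - Real.log n))) =
          Real.exp (γ * s) * Real.exp (-(s * (harmonic n : ℝ))) * (n : ℝ) ^ (s : ℝ) := by
        rw [show (n : ℝ) ^ (s : ℝ) = Real.exp (Real.log n * s) from
          Real.rpow_def_of_pos hn0 s]
        rw [← Real.exp_add, ← Real.exp_add]
        ring_nf
      rw [hprod, hGS, hpow, hexps]
      have hden : (s + 1 + (n:ℝ)) ≠ 0 := hsn
      field_simp
      rw [div_eq_iff (by
        intro hc; exact hsn (by linarith))]
      ring
  have := tendsto_nhds_unique (tendsto_const_nhds.mul hT) key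
  exact this.symm
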